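/- arXiv:1810.05255 — 6 statements merged into one kernel-verified Lean document; each statement's English description precedes it below -/
import Mathlib

section
/- Let R₀ ⊆ R be integral domains with the same field of fractions K, and let x ∈ R₀ be a nonzero element. Then R₀ = R ∩ R₀[1/x] (intersection taken inside K) if and only if the natural map R₀/xR₀ → R/xR is injective. -/
set_option synthInstance.maxHeartbeats 1000000
set_option maxHeartbeats 1000000


/-- Let `R₀ ⊆ R` be integral domains with the same field of fractions `K`
(realized as subrings of `K`, each having every element of `K` as a ratio of its elements),
and let `x ∈ R₀` be nonzero. Then `R₀ = R ∩ R₀[1/x]` inside `K` if and only if the natural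
map `R₀/xR₀ → R/xR` is injective. -/
theorem stmt_1 {K : Type*} [Field K] (R₀ R : Subring K) (hsub : R₀ ≤ R)
    (hfrac₀ : ∀ y : K, ∃ r s : R₀, s ≠ 0 ∧ y * (s : K) = (r : K))
    (hfrac : ∀ y : K, ∃ r s : R, s ≠ 0 ∧ y * (s : K) = (r : K))
    (x : R₀) (hx : x ≠ 0) :
    ((R₀ : Set K) = (R : Set K) ∩ {y : K | ∃ (r : R₀) (n : ℕ), y * (x : K) ^ n = (r : K)})
    ↔ Function.Injective
        (Ideal.quotientMap (Ideal.span {Subring.inclusion hsub x}) (Subring.inclusion hsub)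
          (by
            rw [Ideal.span_le, Set.singleton_subset_iff]
            exact Ideal.mem_comap.mpr (Ideal.subset_span rfl))) := by
  constructor
  · intro heq
    rw [injective_iff_map_eq_zero]
    intro a ha
    obtain ⟨a, rfl⟩ := Ideal.Quotient.mk_surjective a
    rw [Ideal.quotientMap_mk, Ideal.Quotient.eq_zero_iff_mem, Ideal.mem_span_singleton] at ha
    obtain ⟨r, hr⟩ := ha
    rw [Ideal.Quotient.eq_zero_iff_mem, Ideal.mem_span_singleton]
    have hrK : (r : K) ∈ (R₀ : Set K) := by
      rw [heq]
      refine ⟨r.2, a, 1, ?_⟩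
      have h1 : (a : K) = (x : K) * (r : K) := congrArg Subtype.val hr
      rw [pow_one, mul_comm]
      exact h1.symm
    refine ⟨⟨(r : K), hrK⟩, Subtype.ext ?_⟩
    show (a : K) = (x : K) * (r : K)
    exact congrArg Subtype.val hr
  · intro hinj
    have key : ∀ a : R₀, ((a : K) ∈ (R₀ : Set K)) → ∀ z : K, z ∈ R → (a : K) = (x : K) * z →
        ∃ s : R₀, (a : K) = (x : K) * (s : K) := by
      intro a _ z hz haz
      have hd : Subring.inclusion hsub x ∣ Subring.inclusion hsub a :=
        ⟨⟨z, hz⟩, Subtype.ext haz⟩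
      have h0 : (Ideal.quotientMap (Ideal.span {Subring.inclusion hsub x})
          (Subring.inclusion hsub)
          (by
            rw [Ideal.span_le, Set.singleton_subset_iff]
            exact Ideal.mem_comap.mpr (Ideal.subset_span rfl)))
          (Ideal.Quotient.mk _ a) = 0 := by
        rw [Ideal.quotientMap_mk, Ideal.Quotient.eq_zero_iff_mem, Ideal.mem_span_singleton]
        exact hd
      have := hinj (a₁ := Ideal.Quotient.mk _ a) (a₂ := 0) (by rw [h0, map_zero])
      rw [Ideal.Quotient.eq_zero_iff_mem (I := Ideal.span {x}), Ideal.mem_span_singleton] at this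
      obtain ⟨s, hs⟩ := this
      exact ⟨s, congrArg Subtype.val hs⟩
    have main : ∀ n : ℕ, ∀ y : K, y ∈ R → ∀ r : R₀, y * (x : K) ^ n = (r : K) →
        y ∈ (R₀ : Set K) := by
      intro n
      induction n with
      | zero => intro y _ r h; rw [pow_zero, mul_one] at h; rw [h]; exact r.2
      | succ n ih =>
        intro y hy r h
        have hxR : (x : K) ∈ R := hsub x.2
        have hz : y * (x : K) ^ n ∈ R := mul_mem hy (pow_mem hxR n)
        have hzx : (r : K) = (x : K) * (y * (x : K) ^ n) := by
          rw [← h, pow_succ]; ring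
        obtain ⟨s, hs⟩ := key r r.2 _ hz hzx
        have hxK : (x : K) ≠ 0 := fun h => hx (Subtype.ext h)
        have : y * (x : K) ^ n = (s : K) :=
          mul_left_cancel₀ hxK (hzx.symm.trans hs)
        exact ih y hy s this
    ext y
    constructor
    · intro hy
      exact ⟨hsub hy, ⟨y, hy⟩, 0, by simp⟩
    · rintro ⟨hyR, r, n, hrn⟩
      exact main n y hyR r hrn
end

section
/- Let K be a field of characteristic p > 0, let K_t be an algebraic closure of the Laurent series field K((t)), with the t-adic valuation v_t extended (uniquely) to a Q-valued valuation on K_t. For a ∈ K with a ≠ 0, the polynomial X - tX^p - a ∈ K((t))[X] has p distinct roots in K_t; exactly p−1 of these roots have valuation −1/(p−1), and exactly one root has valuation 0. -/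
section Aux
variable {Kt : Type*} [Field Kt] (v : Kt → ℚ)
  (hv_mul : ∀ x y : Kt, x ≠ 0 → y ≠ 0 → v (x * y) = v x + v y)
  (hv_add : ∀ x y : Kt, x ≠ 0 → y ≠ 0 → x + y ≠ 0 → min (v x) (v y) ≤ v (x + y))

include hv_mul

lemma aux_v_one : v 1 = 0 := by
  have := hv_mul 1 1 one_ne_zero one_ne_zero
  simp at this
  linarith

lemma aux_v_neg (x : Kt) (hx : x ≠ 0) : v (-x) = v x := by
  have h1 : v ((-1 : Kt) * (-1)) = v (-1) + v (-1) := hv_mul _ _ (by norm_num) (by norm_num)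
  simp [aux_v_one v hv_mul] at h1
  have h2 : v ((-1 : Kt) * x) = v (-1) + v x := hv_mul _ _ (by norm_num) hx
  rw [neg_one_mul] at h2
  rw [h2]; linarith

lemma aux_v_pow (x : Kt) (hx : x ≠ 0) (n : ℕ) : v (x ^ n) = n * v x := by
  induction n with
  | zero => simp [aux_v_one v hv_mul]
  | succ n ih =>
    rw [pow_succ, hv_mul _ _ (pow_ne_zero n hx) hx, ih]
    push_cast; ring

include hv_add

lemma aux_v_add_lt (x y : Kt) (hx : x ≠ 0) (hy : y ≠ 0) (h : v x < v y) :
    v (x + y) = v x := by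
  have hxy : x + y ≠ 0 := by
    intro h0
    have : x = -y := by linear_combination h0
    rw [this, aux_v_neg v hv_mul y hy] at h; exact lt_irrefl _ h
  have h1 : v x ≤ v (x + y) := by
    have := hv_add x y hx hy hxy
    have hm : min (v x) (v y) = v x := min_eq_left h.le
    linarith [hm ▸ this]
  rcases lt_or_eq_of_le h1 with hlt | heq
  · exfalso
    have hx' : x = (x + y) + (-y) := by ring
    have h2 := hv_add (x + y) (-y) hxy (neg_ne_zero.mpr hy) (by rw [← hx']; exact hx)
    rw [← hx', aux_v_neg v hv_mul y hy] at h2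
    have : min (v (x + y)) (v y) > v x := lt_min hlt h
    linarith
  · exact heq.symm

omit hv_add in
lemma aux_v_prod (s : Multiset Kt) (hs : ∀ x ∈ s, x ≠ 0) :
    v s.prod = (s.map v).sum := by
  induction s using Multiset.induction with
  | empty => simp [aux_v_one v hv_mul]
  | cons x s ih =>
    have hx : x ≠ 0 := hs x (Multiset.mem_cons_self x s)
    have hsprod : s.prod ≠ 0 := Multiset.prod_ne_zero (fun h => hs 0 (Multiset.mem_cons_of_mem h) rfl)
    rw [Multiset.prod_cons, hv_mul x s.prod hx hsprod, Multiset.map_cons, Multiset.sum_cons,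
      ih (fun y hy => hs y (Multiset.mem_cons_of_mem hy))]

end Aux

/-- Let `K` be a field of characteristic `p`, `K_t` an algebraic closure of the
Laurent series field `K((t))`, and `v : K_t → ℚ` the (additive, normalized by `v(t)=1`)
extension of the `t`-adic valuation: `v` is multiplicative, satisfies the ultrametric
inequality, and restricts on `K((t))` to the order-of-vanishing valuation. Then for
`a ∈ K`, `a ≠ 0`, the polynomial `X − tX^p − a` has `p` distinct roots in `K_t`;
exactly `p − 1` of them have valuation `−1/(p−1)` and exactly one has valuation `0`. -/
theorem stmt_2 (p : ℕ) [Fact p.Prime] {K : Type*} [Field K] [CharP K p]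
    {Kt : Type*} [Field Kt] [DecidableEq Kt] [Algebra (LaurentSeries K) Kt]
    [IsAlgClosed Kt] [Algebra.IsAlgebraic (LaurentSeries K) Kt]
    (v : Kt → ℚ)
    (hv_mul : ∀ x y : Kt, x ≠ 0 → y ≠ 0 → v (x * y) = v x + v y)
    (hv_add : ∀ x y : Kt, x ≠ 0 → y ≠ 0 → x + y ≠ 0 → min (v x) (v y) ≤ v (x + y))
    (hv_ext : ∀ f : LaurentSeries K, f ≠ 0 →
      v (algebraMap (LaurentSeries K) Kt f) = (f.order : ℚ))
    (a : K) (ha : a ≠ 0) :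
    let P : Polynomial Kt :=
      Polynomial.X
        - Polynomial.C (algebraMap (LaurentSeries K) Kt (HahnSeries.single 1 1))
            * Polynomial.X ^ p
        - Polynomial.C (algebraMap (LaurentSeries K) Kt (HahnSeries.C a))
    Multiset.card P.roots = p ∧ P.roots.Nodup ∧
    (P.roots.toFinset.filter fun z => v z = -(1 / ((p : ℚ) - 1))).card = p - 1 ∧
    (P.roots.toFinset.filter fun z => v z = 0).card = 1 := by
  intro P
  have hp : p.Prime := Fact.out
  have hp2 : 2 ≤ p := hp.two_le
  have hinj : Function.Injective (algebraMap (LaurentSeries K) Kt) :=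
    (algebraMap (LaurentSeries K) Kt).injective
  set t' : Kt := algebraMap (LaurentSeries K) Kt (HahnSeries.single 1 1) with ht'
  set a' : Kt := algebraMap (LaurentSeries K) Kt (HahnSeries.C a) with ha'
  have hsingle : (HahnSeries.single (1:ℤ) (1:K)) ≠ 0 := HahnSeries.single_ne_zero one_ne_zero
  have hCa : (HahnSeries.C a : LaurentSeries K) ≠ 0 := HahnSeries.C_ne_zero ha
  have ht0 : t' ≠ 0 := by
    simp only [ht', ne_eq, map_eq_zero]; exact hsingle
  have ha0 : a' ≠ 0 := by
    rw [ha', ne_eq, map_eq_zero]; exact hCa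
  have hvt : v t' = 1 := by
    rw [ht', hv_ext _ hsingle, HahnSeries.order_single one_ne_zero]; norm_num
  have hva : v a' = 0 := by
    rw [ha', hv_ext _ hCa, HahnSeries.order_C]; norm_num
  -- characteristic
  have hKLK : CharP (LaurentSeries K) p :=
    charP_of_injective_ringHom (HahnSeries.C_injective (Γ := ℤ) (R := K)) p
  have hKt : CharP Kt p := by
    exact charP_of_injective_algebraMap hinj p
  -- degree facts
  have hPeq : P = Polynomial.C (-t') * Polynomial.X ^ p + (Polynomial.X - Polynomial.C a') := by
    simp only [P, map_neg]; ring
  have hdeg1 : (Polynomial.C (-t') * Polynomial.X ^ p : Polynomial Kt).degree = p :=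
    Polynomial.degree_C_mul_X_pow p (neg_ne_zero.mpr ht0)
  have hdeg2 : (Polynomial.X - Polynomial.C a' : Polynomial Kt).degree = 1 :=
    Polynomial.degree_X_sub_C a'
  have hPdeg : P.degree = p := by
    rw [hPeq, Polynomial.degree_add_eq_left_of_degree_lt, hdeg1]
    rw [hdeg1, hdeg2]
    exact_mod_cast Nat.one_lt_cast.mpr (lt_of_lt_of_le one_lt_two hp2)
  have hPnatdeg : P.natDegree = p := Polynomial.natDegree_eq_of_degree_eq_some hPdeg
  have hP0 : P ≠ 0 := fun h => by
    rw [h, Polynomial.degree_zero] at hPdeg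
    exact absurd hPdeg.symm (by simp)
  have hPlead : P.leadingCoeff = -t' := by
    rw [Polynomial.leadingCoeff, hPnatdeg, hPeq]
    rw [Polynomial.coeff_add, Polynomial.coeff_C_mul, Polynomial.coeff_X_pow, if_pos rfl,
      Polynomial.coeff_sub, Polynomial.coeff_X, Polynomial.coeff_C,
      if_neg (by omega), if_neg (by omega)]
    ring
  have hPeval0 : P.eval 0 = -a' := by
    simp only [P, Polynomial.eval_sub, Polynomial.eval_X, Polynomial.eval_mul,
      Polynomial.eval_pow, Polynomial.eval_C]
    rw [zero_pow hp.ne_zero]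
    ring
  -- separability and root count
  have hcp : (p : Kt) = 0 := CharP.cast_eq_zero Kt p
  have hder : Polynomial.derivative P = 1 := by
    simp only [P, Polynomial.derivative_sub, Polynomial.derivative_X, Polynomial.derivative_C_mul,
      Polynomial.derivative_X_pow, Polynomial.derivative_C, hcp, Polynomial.C_0, zero_mul,
      mul_zero, sub_zero]
  have hsep : P.Separable := by
    rw [Polynomial.Separable, hder]; exact isCoprime_one_right
  have hnodup : P.roots.Nodup := Polynomial.nodup_roots hsep
  have hsplits : P.Splits := IsAlgClosed.splits P
  have hcard : Multiset.card P.roots = p := by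
    rw [Polynomial.splits_iff_card_roots.mp hsplits, hPnatdeg]
  -- roots are nonzero
  have hroot_ne : ∀ z ∈ P.roots, z ≠ 0 := by
    intro z hz h0
    have := Polynomial.isRoot_of_mem_roots hz
    rw [Polynomial.IsRoot, h0, hPeval0] at this
    exact ha0 (neg_eq_zero.mp this)
  have hpq : ((p:ℚ) - 1) ≠ 0 := by
    have : (2:ℚ) ≤ p := by exact_mod_cast hp2
    linarith
  -- each root has valuation 0 or -1/(p-1)
  have hval : ∀ z ∈ P.roots, v z = 0 ∨ v z = -(1 / ((p:ℚ) - 1)) := by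
    intro z hz
    have hz0 : z ≠ 0 := hroot_ne z hz
    have hzr : z - t' * z ^ p - a' = 0 := by
      have := Polynomial.isRoot_of_mem_roots hz
      simpa only [P, Polynomial.IsRoot, Polynomial.eval_sub, Polynomial.eval_mul, Polynomial.eval_X,
        Polynomial.eval_pow, Polynomial.eval_C] using this
    have htz0 : t' * z ^ p ≠ 0 := mul_ne_zero ht0 (pow_ne_zero p hz0)
    have hvtz : v (t' * z ^ p) = 1 + p * v z := by
      rw [hv_mul _ _ ht0 (pow_ne_zero p hz0), hvt, aux_v_pow v hv_mul z hz0]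
    rcases lt_trichotomy (v z) 0 with hlt | heq | hgt
    · right
      -- v z < 0: must have v z = 1 + p v z
      have hsum : z - t' * z ^ p = a' := by linear_combination hzr
      have hvneg : v (-(t' * z ^ p)) = 1 + p * v z := by
        rw [aux_v_neg v hv_mul _ htz0, hvtz]
      by_cases hcase : v z = 1 + p * v z
      · -- v z (p-1) = -1
        field_simp
        linarith [hcase]
      · exfalso
        rcases lt_or_gt_of_ne hcase with h1 | h1
        · have := aux_v_add_lt v hv_mul hv_add z (-(t' * z ^ p)) hz0 (neg_ne_zero.mpr htz0)
            (by rw [hvneg]; exact h1)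
          rw [← sub_eq_add_neg, hsum, hva] at this
          linarith
        · have := aux_v_add_lt v hv_mul hv_add (-(t' * z ^ p)) z (neg_ne_zero.mpr htz0) hz0
            (by rw [hvneg]; exact h1)
          rw [add_comm, ← sub_eq_add_neg, hsum, hva, hvneg] at this
          linarith
    · left; exact heq
    · exfalso
      -- v z > 0: z = a' + t' z^p, v a' = 0 < v(t'z^p)
      have hsum : a' + t' * z ^ p = z := by linear_combination -hzr
      have := aux_v_add_lt v hv_mul hv_add a' (t' * z ^ p) ha0 htz0
        (by rw [hva, hvtz]; positivity)
      rw [hsum, hva] at this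
      linarith
  -- sum of valuations of roots is -1
  have hprod := Polynomial.Splits.eq_prod_roots hsplits
  have heval := congrArg (Polynomial.eval 0) hprod
  rw [hPeval0, Polynomial.eval_mul, Polynomial.eval_C, hPlead, Polynomial.eval_multiset_prod,
    Multiset.map_map] at heval
  have heval' : -a' = -t' * ((P.roots.map (fun z => -z)).prod) := by
    rw [heval]
    congr 1
    congr 1
    apply Multiset.map_congr rfl
    intro z _
    simp
  have hprod_ne : ∀ x ∈ P.roots.map (fun z => -z), x ≠ 0 := by
    intro x hx
    obtain ⟨z, hz, rfl⟩ := Multiset.mem_map.mp hx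
    exact neg_ne_zero.mpr (hroot_ne z hz)
  have hvprod := aux_v_prod v hv_mul ((P.roots.map (fun z => -z))) hprod_ne
  have hprodne : ((P.roots.map (fun z => -z)).prod) ≠ 0 :=
    Multiset.prod_ne_zero (fun h => hprod_ne 0 h rfl)
  have hv1 : v (-a') = v (-t') + v ((P.roots.map (fun z => -z)).prod) := by
    rw [heval', hv_mul _ _ (neg_ne_zero.mpr ht0) hprodne]
  rw [aux_v_neg v hv_mul _ ha0, aux_v_neg v hv_mul _ ht0, hva, hvt, hvprod] at hv1
  have hmapv : ((P.roots.map (fun z => -z)).map v) = P.roots.map v := by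
    rw [Multiset.map_map]
    apply Multiset.map_congr rfl
    intro z hz
    exact aux_v_neg v hv_mul z (hroot_ne z hz)
  rw [hmapv] at hv1
  have hsumv : (P.roots.map v).sum = -1 := by linarith
  -- counting
  classical
  set S := P.roots.toFinset with hS
  have hScard : S.card = p := by
    rw [hS, Multiset.toFinset_card_of_nodup hnodup, hcard]
  set A := S.filter (fun z => v z = -(1 / ((p:ℚ) - 1))) with hA
  set B := S.filter (fun z => v z = 0) with hB
  have hne : -(1 / ((p:ℚ) - 1)) ≠ 0 := by
    rw [neg_ne_zero]
    exact one_div_ne_zero hpq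
  have hdisj : Disjoint A B :=
    Finset.disjoint_filter.mpr (fun x _ h1 h2 => hne (h1.symm.trans h2))
  have hunion : A ∪ B = S := by
    rw [hA, hB, ← Finset.filter_or]
    apply Finset.filter_true_of_mem
    intro z hz
    rcases hval z (Multiset.mem_toFinset.mp hz) with h | h
    · exact Or.inr h
    · exact Or.inl h
  have hcardAB : A.card + B.card = p := by
    rw [← Finset.card_union_of_disjoint hdisj, hunion, hScard]
  -- sum over finset equals sum over multiset
  have hSval : S.1 = P.roots := by
    rw [hS, Multiset.toFinset_val, Multiset.Nodup.dedup hnodup]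
  have hsumS : ∑ z ∈ S, v z = -1 := by
    have hdef : ∑ z ∈ S, v z = (Multiset.map v S.1).sum := rfl
    rw [hdef, hSval, hsumv]
  have hsplit : ∑ z ∈ S, v z = ∑ z ∈ A, v z + ∑ z ∈ B, v z := by
    rw [← Finset.sum_union hdisj, hunion]
  have hsumA : ∑ z ∈ A, v z = A.card * (-(1 / ((p:ℚ) - 1))) := by
    rw [Finset.sum_congr rfl (fun z hz => (Finset.mem_filter.mp hz).2), Finset.sum_const,
      nsmul_eq_mul]
  have hsumB : ∑ z ∈ B, v z = 0 := by
    rw [Finset.sum_congr rfl (fun z hz => (Finset.mem_filter.mp hz).2), Finset.sum_const,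
      smul_zero]
  have hAq : (A.card : ℚ) = (p : ℚ) - 1 := by
    have h2 : (A.card : ℚ) * (-(1 / ((p:ℚ) - 1))) = -1 := by
      rw [← hsumA]
      linarith [hsplit, hsumS, hsumB]
    have h4 : (A.card : ℚ) * (1 / ((p:ℚ) - 1)) = 1 := by linarith
    rw [mul_one_div, div_eq_one_iff_eq hpq] at h4
    exact h4
  have hAcard : A.card = p - 1 := by
    have : (A.card : ℚ) = ((p - 1 : ℕ) : ℚ) := by
      rw [hAq, Nat.cast_sub (le_of_lt (lt_of_lt_of_le one_lt_two hp2))]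
      norm_num
    exact_mod_cast this
  have hBcard : B.card = 1 := by omega
  exact ⟨hcard, hnodup, hAcard, hBcard⟩
end

section
/- In Z^n with the standard basis, let η_ω = −(p−1,...,p−1) and for 1 ≤ i ≤ n−1 let S_i = (1,...,1,0,...,0) − (0,...,0,p,...,p) where 1 and p each appear i times. Then the cone {λ ∈ Z^n : p·(a_n,...,a_1) + (a_1,...,a_n) has all coordinates forming an antidominant symplectic weight} (equivalently the saturated Schubert cone for Sp(2n)) is the saturation of the monoid generated by η_ω and S_1, ..., S_{n−1}: i.e., λ is in this cone if and only if some positive integer multiple mλ is a nonnegative integer combination of η_ω, S_1, ..., S_{n−1}. -/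
set_option maxHeartbeats 1000000

private lemma tele_sum (f : ℕ → ℤ) {a m : ℕ} (h : a ≤ m) :
    ∑ i ∈ Finset.Ico a m, (f (i + 1) - f i) = f m - f a := by
  induction m with
  | zero =>
    have : a = 0 := by omega
    subst this; simp
  | succ m ih =>
    rcases Nat.lt_or_ge a (m + 1) with hlt | hge
    · have ham : a ≤ m := by omega
      rw [Finset.sum_Ico_succ_top (by omega), ih ham]
      ring
    · have : a = m + 1 := by omega
      subst this; simp

/-- In `ℤⁿ` (with `lam : Fin n → ℤ` 0-indexed), the saturated Schubert cone for
`Sp(2n)` — cut out by `(p·a_{i+1} + a_{n−i}) − (p·a_i + a_{n+1−i}) ≤ 0` for `i = 1,…,n−1`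
and `p·a₁ + a_n ≤ 0` — is the saturation of the monoid generated by
`η_ω = −(p−1,…,p−1)` and `S_i = (1,…,1,0,…,0) − (0,…,0,p,…,p)` (`1` and `p` appearing
`i` times each), `i = 1,…,n−1`. -/
theorem stmt_9 (p n : ℕ) [Fact p.Prime] (hn : 0 < n) (lam : Fin n → ℤ) :
    ((∀ j k : Fin n, (j : ℕ) + 1 = (k : ℕ) →
        ((p : ℤ) * lam k + lam (Fin.rev k)) - ((p : ℤ) * lam j + lam (Fin.rev j)) ≤ 0) ∧
      (p : ℤ) * lam ⟨0, hn⟩ + lam (Fin.rev ⟨0, hn⟩) ≤ 0)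
    ↔
    (∃ m : ℕ, 0 < m ∧ ∃ c : ℕ → ℕ,
      ∀ k : Fin n,
        (m : ℤ) * lam k =
          (c 0 : ℤ) * (-((p : ℤ) - 1)) +
          ∑ i ∈ Finset.Ico 1 n, (c i : ℤ) *
            ((if (k : ℕ) < i then (1 : ℤ) else 0) -
             (if n - i ≤ (k : ℕ) then (p : ℤ) else 0))) := by
  classical
  have hp2 : 2 ≤ p := (Fact.out : p.Prime).two_le
  have hp : (2 : ℤ) ≤ (p : ℤ) := by exact_mod_cast hp2
  have hpp : 1 ≤ p * p := le_trans (by norm_num) (Nat.mul_le_mul hp2 hp2)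
  have hmcast : ((p * p - 1 : ℕ) : ℤ) = (p : ℤ) * (p : ℤ) - 1 := by
    rw [Nat.cast_sub hpp]; push_cast; ring
  have hrev : ∀ (i : ℕ) (h : i < n),
      Fin.rev ⟨i, h⟩ = (⟨n - 1 - i, by omega⟩ : Fin n) := by
    intro i h
    ext
    simp only [Fin.val_rev]
    omega
  constructor
  · rintro ⟨h1, h0⟩
    set b : ℕ → ℤ := fun i =>
      if h : i < n then (p : ℤ) * lam ⟨i, h⟩ + lam ⟨n - 1 - i, by omega⟩ else 0 with hbdef
    have hb : ∀ (i : ℕ) (hi : i < n) (j : ℕ) (hj : j < n), n - 1 - i = j →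
        b i = (p : ℤ) * lam ⟨i, hi⟩ + lam ⟨j, hj⟩ := by
      intro i hi j hj hij
      subst hij
      simp only [hbdef]
      rw [dif_pos hi]
    have step : ∀ i : ℕ, i + 1 < n → b (i + 1) ≤ b i := by
      intro i hi
      have hin : i < n := by omega
      have hj1 : n - 1 - (i + 1) < n := by omega
      have hj2 : n - 1 - i < n := by omega
      have hh := h1 ⟨i, hin⟩ ⟨i + 1, hi⟩ rfl
      rw [hrev i hin, hrev (i + 1) hi] at hh
      rw [hb (i + 1) hi (n - 1 - (i + 1)) hj1 rfl, hb i hin (n - 1 - i) hj2 rfl]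
      linarith
    have hmono : ∀ j, j < n → ∀ i, i ≤ j → b j ≤ b i := by
      intro j
      induction j with
      | zero =>
        intro _ i hi
        obtain rfl : i = 0 := Nat.le_zero.mp hi
        exact le_refl _
      | succ j ih =>
        intro hj i hi
        rcases Nat.eq_or_lt_of_le hi with h | h
        · rw [h]
        · exact le_trans (step j hj) (ih (by omega) i (by omega))
    have h0b : b 0 ≤ 0 := by
      have hj0 : n - 1 - 0 < n := by omega
      have h00 := h0
      rw [hrev 0 hn] at h00
      rw [hb 0 hn (n - 1 - 0) hj0 rfl]
      linarith
    set c : ℕ → ℕ := fun i =>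
      if i = 0 then (-(b 0)).toNat else (b (n - (i + 1)) - b (n - i)).toNat with hcdef
    have hc0 : (c 0 : ℤ) = -(b 0) := by
      simp only [hcdef, if_pos rfl]
      rw [Int.toNat_of_nonneg (by linarith)]
    have hci : ∀ i, 1 ≤ i → i < n → (c i : ℤ) = b (n - (i + 1)) - b (n - i) := by
      intro i h1i h2i
      have hmm : b (n - i) ≤ b (n - (i + 1)) := hmono (n - i) (by omega) (n - (i + 1)) (by omega)
      simp only [hcdef]
      rw [if_neg (by omega), Int.toNat_of_nonneg (by linarith)]
    have key : ∀ (a : ℕ) (ha : a < n), ((p * p - 1 : ℕ) : ℤ) * lam ⟨a, ha⟩ =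
        (c 0 : ℤ) * (-((p : ℤ) - 1)) +
        ∑ i ∈ Finset.Ico 1 n, (c i : ℤ) *
          ((if a < i then (1 : ℤ) else 0) - (if n - i ≤ a then (p : ℤ) else 0)) := by
      intro a ha
      have h' : n - (a + 1) < n := by omega
      have hA : ∑ i ∈ Finset.Ico 1 n, (if a < i then (c i : ℤ) else 0)
          = b 0 - b (n - (a + 1)) := by
        have hset : Finset.filter (fun i => a < i) (Finset.Ico 1 n) = Finset.Ico (a + 1) n := by
          ext i
          simp only [Finset.mem_filter, Finset.mem_Ico]
          omega
        calc ∑ i ∈ Finset.Ico 1 n, (if a < i then (c i : ℤ) else 0)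
            = ∑ i ∈ Finset.Ico (a + 1) n, (c i : ℤ) := by rw [← Finset.sum_filter, hset]
          _ = ∑ i ∈ Finset.Ico (a + 1) n, (b (n - (i + 1)) - b (n - i)) := by
              refine Finset.sum_congr rfl fun i hi => ?_
              obtain ⟨hi1, hi2⟩ := Finset.mem_Ico.mp hi
              exact hci i (by omega) hi2
          _ = b (n - n) - b (n - (a + 1)) := tele_sum (fun t => b (n - t)) (by omega)
          _ = b 0 - b (n - (a + 1)) := by rw [Nat.sub_self]
      have hB : ∑ i ∈ Finset.Ico 1 n, (if n - i ≤ a then (c i : ℤ) else 0)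
          = b 0 - b a := by
        have hset : Finset.filter (fun i => n - i ≤ a) (Finset.Ico 1 n)
            = Finset.Ico (n - a) n := by
          ext i
          simp only [Finset.mem_filter, Finset.mem_Ico]
          omega
        have hna : n - (n - a) = a := by omega
        calc ∑ i ∈ Finset.Ico 1 n, (if n - i ≤ a then (c i : ℤ) else 0)
            = ∑ i ∈ Finset.Ico (n - a) n, (c i : ℤ) := by rw [← Finset.sum_filter, hset]
          _ = ∑ i ∈ Finset.Ico (n - a) n, (b (n - (i + 1)) - b (n - i)) := by
              refine Finset.sum_congr rfl fun i hi => ?_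
              obtain ⟨hi1, hi2⟩ := Finset.mem_Ico.mp hi
              exact hci i (by omega) hi2
          _ = b (n - n) - b (n - (n - a)) := tele_sum (fun t => b (n - t)) (by omega)
          _ = b 0 - b a := by rw [Nat.sub_self, hna]
      have hrhs : (c 0 : ℤ) * (-((p : ℤ) - 1)) +
          ∑ i ∈ Finset.Ico 1 n, (c i : ℤ) *
            ((if a < i then (1 : ℤ) else 0) - (if n - i ≤ a then (p : ℤ) else 0))
          = (c 0 : ℤ) * (-((p : ℤ) - 1)) +
            ((b 0 - b (n - (a + 1))) - (p : ℤ) * (b 0 - b a)) := by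
        congr 1
        calc ∑ i ∈ Finset.Ico 1 n, (c i : ℤ) *
              ((if a < i then (1 : ℤ) else 0) - (if n - i ≤ a then (p : ℤ) else 0))
            = ∑ i ∈ Finset.Ico 1 n, ((if a < i then (c i : ℤ) else 0)
                - (p : ℤ) * (if n - i ≤ a then (c i : ℤ) else 0)) := by
              refine Finset.sum_congr rfl fun i _ => ?_
              split_ifs <;> ring
          _ = (b 0 - b (n - (a + 1))) - (p : ℤ) * (b 0 - b a) := by
              rw [Finset.sum_sub_distrib, ← Finset.mul_sum, hA, hB]
      have e1 : n - 1 - a = n - (a + 1) := by omega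
      have e2 : n - 1 - (n - (a + 1)) = a := by omega
      rw [hrhs, hc0, hb a ha (n - (a + 1)) h' e1, hb (n - (a + 1)) h' a ha e2, hmcast]
      ring
    refine ⟨p * p - 1, by have := Nat.mul_le_mul hp2 hp2; omega, c, fun k => ?_⟩
    obtain ⟨a, ha⟩ := k
    exact key a ha
  · rintro ⟨m, hm, c, hc⟩
    have hm' : (0 : ℤ) < m := by exact_mod_cast hm
    have hq : (0 : ℤ) ≤ (p : ℤ) * (p : ℤ) - 1 := by nlinarith
    have key : ∀ k : Fin n, (m : ℤ) * ((p : ℤ) * lam k + lam (Fin.rev k)) =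
        -((p : ℤ) * (p : ℤ) - 1) * ((c 0 : ℤ) +
          ∑ i ∈ Finset.Ico 1 n, (if n - i ≤ (k : ℕ) then (c i : ℤ) else 0)) := by
      intro k
      have hk := hc k
      have hrk := hc (Fin.rev k)
      rw [Fin.val_rev] at hrk
      have hkn : (k : ℕ) < n := k.isLt
      have hsum : ∑ i ∈ Finset.Ico 1 n,
          ((p : ℤ) * ((c i : ℤ) * ((if (k : ℕ) < i then (1 : ℤ) else 0)
              - (if n - i ≤ (k : ℕ) then (p : ℤ) else 0)))
            + (c i : ℤ) * ((if n - ((k : ℕ) + 1) < i then (1 : ℤ) else 0)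
              - (if n - i ≤ n - ((k : ℕ) + 1) then (p : ℤ) else 0)))
          = -((p : ℤ) * (p : ℤ) - 1) *
            ∑ i ∈ Finset.Ico 1 n, (if n - i ≤ (k : ℕ) then (c i : ℤ) else 0) := by
        rw [Finset.mul_sum]
        refine Finset.sum_congr rfl fun i hi => ?_
        obtain ⟨hi1, hi2⟩ := Finset.mem_Ico.mp hi
        simp only [show (n - ((k : ℕ) + 1) < i) ↔ (n - i ≤ (k : ℕ)) from by omega,
          show (n - i ≤ n - ((k : ℕ) + 1)) ↔ ((k : ℕ) < i) from by omega]
        split_ifs <;> ring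
      calc (m : ℤ) * ((p : ℤ) * lam k + lam (Fin.rev k))
          = (p : ℤ) * ((m : ℤ) * lam k) + (m : ℤ) * lam (Fin.rev k) := by ring
        _ = ((p : ℤ) * ((c 0 : ℤ) * (-((p : ℤ) - 1))) + (c 0 : ℤ) * (-((p : ℤ) - 1)))
            + ∑ i ∈ Finset.Ico 1 n,
              ((p : ℤ) * ((c i : ℤ) * ((if (k : ℕ) < i then (1 : ℤ) else 0)
                  - (if n - i ≤ (k : ℕ) then (p : ℤ) else 0)))
                + (c i : ℤ) * ((if n - ((k : ℕ) + 1) < i then (1 : ℤ) else 0)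
                  - (if n - i ≤ n - ((k : ℕ) + 1) then (p : ℤ) else 0))) := by
            rw [hk, hrk, Finset.sum_add_distrib, ← Finset.mul_sum]
            ring
        _ = ((p : ℤ) * ((c 0 : ℤ) * (-((p : ℤ) - 1))) + (c 0 : ℤ) * (-((p : ℤ) - 1)))
            + -((p : ℤ) * (p : ℤ) - 1) *
              ∑ i ∈ Finset.Ico 1 n, (if n - i ≤ (k : ℕ) then (c i : ℤ) else 0) := by
            rw [hsum]
        _ = -((p : ℤ) * (p : ℤ) - 1) * ((c 0 : ℤ) +
            ∑ i ∈ Finset.Ico 1 n, (if n - i ≤ (k : ℕ) then (c i : ℤ) else 0)) := by ring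
    constructor
    · intro j k hjk
      have hS : ∑ i ∈ Finset.Ico 1 n, (if n - i ≤ (j : ℕ) then (c i : ℤ) else 0)
          ≤ ∑ i ∈ Finset.Ico 1 n, (if n - i ≤ (k : ℕ) then (c i : ℤ) else 0) := by
        refine Finset.sum_le_sum fun i _ => ?_
        split_ifs <;> omega
      have h4 : (m : ℤ) * (((p : ℤ) * lam k + lam (Fin.rev k))
          - ((p : ℤ) * lam j + lam (Fin.rev j))) ≤ 0 := by
        rw [mul_sub, key k, key j]
        nlinarith [mul_nonneg hq (sub_nonneg.mpr hS)]
      by_contra hX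
      push_neg at hX
      nlinarith [mul_pos hm' hX]
    · have hS0 : (0 : ℤ) ≤ (c 0 : ℤ) +
          ∑ i ∈ Finset.Ico 1 n, (if n - i ≤ ((⟨0, hn⟩ : Fin n) : ℕ) then (c i : ℤ) else 0) := by
        refine add_nonneg (by positivity) (Finset.sum_nonneg fun i _ => ?_)
        split_ifs <;> positivity
      have h4 := key ⟨0, hn⟩
      by_contra hX
      push_neg at hX
      nlinarith [mul_pos hm' hX, mul_nonneg hq hS0]
end

section
/- For G = Sp(4) (n = 2), the saturated zip cone, which equals the saturation of the monoid N·(1,−p) + N·(1−p,1−p) + N·(0,−p(p−1)) inside Z², is exactly the set of pairs (a_1, a_2) ∈ Z² satisfying a_1 ≥ a_2 and p·a_1 + a_2 ≤ 0. -/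
/-- For `G = Sp(4)`, the saturation of the monoid
`ℕ·(1,−p) + ℕ·(1−p,1−p) + ℕ·(0,−p(p−1))` inside `ℤ²` (the zip cone `C_zip`) is exactly the
set of pairs `(a₁, a₂)` with `a₁ ≥ a₂` and `p·a₁ + a₂ ≤ 0`. -/
theorem stmt_11 (p : ℕ) [Fact p.Prime] (a : ℤ × ℤ) :
    (∃ m : ℕ, 0 < m ∧ ∃ c₁ c₂ c₃ : ℕ,
        (m : ℤ) • a =
          (c₁ : ℤ) • ((1 : ℤ), -(p : ℤ)) +
          (c₂ : ℤ) • ((1 - (p : ℤ), 1 - (p : ℤ)) : ℤ × ℤ) +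
          (c₃ : ℤ) • (((0 : ℤ), -((p : ℤ) * ((p : ℤ) - 1))) : ℤ × ℤ))
    ↔ (a.2 ≤ a.1 ∧ (p : ℤ) * a.1 + a.2 ≤ 0) := by
  have hp2 : (2 : ℤ) ≤ (p : ℤ) := by exact_mod_cast (Fact.out : p.Prime).two_le
  constructor
  · rintro ⟨m, hm, c₁, c₂, c₃, h⟩
    have hm' : (0 : ℤ) < (m : ℤ) := by exact_mod_cast hm
    have h1 : (m : ℤ) * a.1 = c₁ * 1 + c₂ * (1 - p) + c₃ * 0 := by
      have := congrArg Prod.fst h; simpa [Prod.smul_def, smul_eq_mul] using this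
    have h2 : (m : ℤ) * a.2 = c₁ * (-(p : ℤ)) + c₂ * (1 - p) + c₃ * (-(p * (p - 1))) := by
      have := congrArg Prod.snd h; simpa [Prod.smul_def, smul_eq_mul] using this
    have hc₁ : (0 : ℤ) ≤ c₁ := Int.natCast_nonneg _
    have hc₂ : (0 : ℤ) ≤ c₂ := Int.natCast_nonneg _
    have hc₃ : (0 : ℤ) ≤ c₃ := Int.natCast_nonneg _
    constructor
    · nlinarith [mul_nonneg hc₃ (by nlinarith : (0:ℤ) ≤ (p:ℤ) * (p - 1)),
        mul_nonneg hc₁ (by linarith : (0:ℤ) ≤ (p:ℤ) + 1)]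
    · nlinarith [mul_nonneg hc₃ (by nlinarith : (0:ℤ) ≤ (p:ℤ) * (p - 1)),
        mul_nonneg hc₂ (by nlinarith : (0:ℤ) ≤ ((p:ℤ) - 1) * ((p:ℤ) + 1))]
  · rintro ⟨h1, h2⟩
    have hpp : 4 ≤ p * p := by
      have h2 := (Fact.out : p.Prime).two_le
      calc 4 = 2 * 2 := rfl
        _ ≤ p * p := Nat.mul_le_mul h2 h2
    refine ⟨p * p - 1, by omega, 
      ((a.1 - a.2) * ((p : ℤ) - 1)).toNat, (-((p : ℤ) * a.1 + a.2)).toNat, 0, ?_⟩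
    have e1 : (((a.1 - a.2) * ((p : ℤ) - 1)).toNat : ℤ) = (a.1 - a.2) * ((p : ℤ) - 1) :=
      Int.toNat_of_nonneg (by nlinarith)
    have e2 : ((-((p : ℤ) * a.1 + a.2)).toNat : ℤ) = -((p : ℤ) * a.1 + a.2) :=
      Int.toNat_of_nonneg (by linarith)
    have em : ((p * p - 1 : ℕ) : ℤ) = (p : ℤ) * p - 1 := by
      have : 1 ≤ p * p := by nlinarith [(Fact.out : p.Prime).two_le]
      push_cast [Nat.cast_sub this]; ring
    ext <;>
      simp only [Prod.smul_def, smul_eq_mul, Prod.fst_add, Prod.snd_add, Prod.mk_add_mk,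
        Prod.mk.injEq] <;>
      rw [em] <;> simp only [e1, e2] <;> push_cast <;> ring
end

section
/- For G = Sp(6) (n = 3) and p prime, the cone in Z³ generated (after saturation) by η_1 = (p+1, −p², −p²), η_2 = (1, 1, −p(p+1)), η_ω = −(p−1,p−1,p−1), and S_1 = (1, 0, −p) is exactly the set of (a_1, a_2, a_3) ∈ Z³ satisfying: a_1 ≥ a_2 ≥ a_3, p²a_1 + p a_3 + a_2 ≤ 0, and p²a_2 + p a_1 + a_3 ≤ 0. -/
/-- For `G = Sp(6)` and `p` prime, the saturated cone in `ℤ³` generated by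
`η₁ = (p+1, −p², −p²)`, `η₂ = (1, 1, −p(p+1))`, `η_ω = −(p−1,p−1,p−1)` and `S₁ = (1,0,−p)`
is exactly the set of `(a₁,a₂,a₃)` with `a₁ ≥ a₂ ≥ a₃`, `p²a₁ + pa₃ + a₂ ≤ 0` and
`p²a₂ + pa₁ + a₃ ≤ 0`. -/
theorem stmt_12 (p : ℕ) [Fact p.Prime] (a : ℤ × ℤ × ℤ) :
    (∃ m : ℕ, 0 < m ∧ ∃ c₁ c₂ c₃ c₄ : ℕ,
        (m : ℤ) • a =
          (c₁ : ℤ) • ((((p : ℤ) + 1, -(p : ℤ) ^ 2, -(p : ℤ) ^ 2)) : ℤ × ℤ × ℤ) +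
          (c₂ : ℤ) • (((1, 1, -((p : ℤ) * ((p : ℤ) + 1)))) : ℤ × ℤ × ℤ) +
          (c₃ : ℤ) • (((-((p : ℤ) - 1), -((p : ℤ) - 1), -((p : ℤ) - 1))) : ℤ × ℤ × ℤ) +
          (c₄ : ℤ) • (((1, 0, -(p : ℤ))) : ℤ × ℤ × ℤ))
    ↔ (a.2.1 ≤ a.1 ∧ a.2.2 ≤ a.2.1 ∧
        (p : ℤ) ^ 2 * a.1 + (p : ℤ) * a.2.2 + a.2.1 ≤ 0 ∧
        (p : ℤ) ^ 2 * a.2.1 + (p : ℤ) * a.1 + a.2.2 ≤ 0) := by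
  obtain ⟨a1, a2, a3⟩ := a
  have hp2 : 2 ≤ p := (Fact.out : p.Prime).two_le
  have hp : (2 : ℤ) ≤ (p : ℤ) := by exact_mod_cast hp2
  set P : ℤ := (p : ℤ) with hPdef
  have hP3 : (0:ℤ) ≤ P^3 - 1 := by
    have h8 : (2:ℤ)^3 ≤ P^3 := pow_le_pow_left₀ (by norm_num) hp 3
    norm_num at h8; linarith
  simp only [Prod.smul_mk, smul_eq_mul, Prod.mk_add_mk, Prod.mk.injEq]
  constructor
  · rintro ⟨m, hm, c1, c2, c3, c4, h1, h2, h3⟩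
    have hm' : (0:ℤ) < (m:ℤ) := by exact_mod_cast hm
    have hc1 : (0:ℤ) ≤ (c1:ℤ) := Int.natCast_nonneg _
    have hc2 : (0:ℤ) ≤ (c2:ℤ) := Int.natCast_nonneg _
    have hc3 : (0:ℤ) ≤ (c3:ℤ) := Int.natCast_nonneg _
    have hc4 : (0:ℤ) ≤ (c4:ℤ) := Int.natCast_nonneg _
    have k0 : (m:ℤ) * (a1 - a2) = c1 * (P^2 + P + 1) + c4 := by linear_combination h1 - h2
    have k1 : (m:ℤ) * (a2 - a3) = c2 * (P^2 + P + 1) + c4 * P := by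
      linear_combination h2 - h3
    have k2 : (m:ℤ) * (-(P^2*a1 + P*a3 + a2)) = c2 * (P^3 - 1) + c3 * (P^3 - 1) := by
      linear_combination (-P^2) * h1 - h2 - P * h3
    have k3 : (m:ℤ) * (-(P^2*a2 + P*a1 + a3)) = c1 * (P * (P^3 - 1)) + c3 * (P^3 - 1) := by
      linear_combination (-P) * h1 - P^2 * h2 - h3
    have q0 : (0:ℤ) ≤ (m:ℤ) * (a1 - a2) := by
      rw [k0]; have := mul_nonneg hc1 (by nlinarith : (0:ℤ) ≤ P^2 + P + 1); linarith
    have q1 : (0:ℤ) ≤ (m:ℤ) * (a2 - a3) := by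
      rw [k1]
      have := mul_nonneg hc2 (by nlinarith : (0:ℤ) ≤ P^2 + P + 1)
      have := mul_nonneg hc4 (by linarith : (0:ℤ) ≤ P)
      linarith
    have q2 : (0:ℤ) ≤ (m:ℤ) * (-(P^2*a1 + P*a3 + a2)) := by
      rw [k2]
      have := mul_nonneg hc2 hP3
      have := mul_nonneg hc3 hP3
      linarith
    have q3 : (0:ℤ) ≤ (m:ℤ) * (-(P^2*a2 + P*a1 + a3)) := by
      rw [k3]
      have := mul_nonneg hc1 (mul_nonneg (by linarith : (0:ℤ) ≤ P) hP3)
      have := mul_nonneg hc3 hP3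
      linarith
    have div : ∀ x : ℤ, 0 ≤ (m:ℤ) * x → 0 ≤ x := fun x hx =>
      le_of_mul_le_mul_left (by simpa using hx) hm'
    have r0 := div _ q0
    have r1 := div _ q1
    have r2 := div _ q2
    have r3 := div _ q3
    exact ⟨by linarith, by linarith, by linarith, by linarith⟩
  · rintro ⟨h0, h1, h2, h3⟩
    by_cases hF : P^2*a1 + P*a2 + a3 ≤ 0
    · refine ⟨p^3 - 1, ?_, ((P-1)*(a1-a2)).toNat, ((P-1)*(a2-a3)).toNat,
        (-(P^2*a1+P*a2+a3)).toNat, 0, ?_, ?_, ?_⟩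
      · have : 2^3 ≤ p^3 := Nat.pow_le_pow_left hp2 3
        omega
      all_goals
        have hm : ((p^3 - 1 : ℕ) : ℤ) = P^3 - 1 := by
          have : 1 ≤ p^3 := Nat.one_le_iff_ne_zero.mpr (by positivity)
          push_cast [Nat.cast_sub this]; ring
        rw [hm,
          Int.toNat_of_nonneg (mul_nonneg (by linarith) (by linarith)),
          Int.toNat_of_nonneg (mul_nonneg (by linarith : (0:ℤ) ≤ P - 1) (by linarith)),
          Int.toNat_of_nonneg (by linarith : (0:ℤ) ≤ -(P^2*a1+P*a2+a3))]
        push_cast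
        ring
    · push_neg at hF
      refine ⟨p^4 - p, ?_, (-(P^2*a2+P*a1+a3)).toNat, (P * (-(P^2*a1+P*a3+a2))).toNat,
        0, ((P^2+P+1)*(P^2*a1+P*a2+a3)).toNat, ?_, ?_, ?_⟩
      · have h : p^1 < p^4 := Nat.pow_lt_pow_right (by omega) (by norm_num)
        rw [pow_one] at h
        omega
      all_goals
        have hm : ((p^4 - p : ℕ) : ℤ) = P^4 - P := by
          have : p ≤ p^4 := Nat.le_self_pow (by norm_num) p
          push_cast [Nat.cast_sub this]; ring
        rw [hm,
          Int.toNat_of_nonneg (by linarith : (0:ℤ) ≤ -(P^2*a2+P*a1+a3)),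
          Int.toNat_of_nonneg (mul_nonneg (by linarith : (0:ℤ) ≤ P) (by linarith)),
          Int.toNat_of_nonneg (mul_nonneg (by nlinarith : (0:ℤ) ≤ P^2+P+1) (by linarith))]
        push_cast
        ring
end

section
/- Let k be an algebraically closed field of characteristic p, let R = k[a_{11}, a_{12}, a_{21}, a_{22}] be the polynomial ring in the entries of a generic 2×2 matrix, and set Δ₁ = a_{12}, Δ₂ = a_{11}a_{22} − a_{12}a_{21}, α = a_{11}·a_{12}^{p−1} + a_{22}^p. Then the subring R_zip := k[Δ₁, Δ₂, α] of R satisfies: (a) α, Δ₁, Δ₂ are algebraically independent over k, so R_zip is a polynomial ring in 3 variables; (b) R_zip = R ∩ k[Δ₁, Δ₂, α][1/Δ₁] inside the fraction field of R; equivalently, the map k[Δ₁,Δ₂,α]/(Δ₁) → R/(Δ₁) is injective. -/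
open MvPolynomial

theorem aux_monomial_indep {k : Type*} [Field k] {σ τ : Type*}
    (d : σ → (τ →₀ ℕ))
    (hT : Function.Injective fun e : σ →₀ ℕ => e.sum fun i n => n • d i) :
    AlgebraicIndependent k (fun i => (monomial (d i) (1 : k) : MvPolynomial τ k)) := by
  classical
  set T : (σ →₀ ℕ) → (τ →₀ ℕ) := fun e => e.sum fun i n => n • d i with hTdef
  have key : ∀ (e : σ →₀ ℕ) (c : k),
      aeval (fun i => (monomial (d i) (1 : k) : MvPolynomial τ k)) (monomial e c)
        = monomial (T e) c := by
    intro e c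
    rw [aeval_monomial, hTdef]
    have h1 : (e.prod fun i n => (monomial (d i) (1 : k) : MvPolynomial τ k) ^ n)
        = e.prod fun i n => (monomial (n • d i) (1 : k) : MvPolynomial τ k) := by
      apply Finsupp.prod_congr
      intro i _
      rw [monomial_pow, one_pow]
    rw [h1, algebraMap_eq]
    exact (monomial_finsupp_sum_index e _ c).symm
  rw [algebraicIndependent_iff]
  intro P hP
  have expand : (aeval (fun i => (monomial (d i) (1 : k) : MvPolynomial τ k))) P
      = P.support.sum fun e => monomial (T e) (coeff e P) := by
    conv_lhs => rw [P.as_sum]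
    rw [map_sum]
    exact Finset.sum_congr rfl fun e _ => key e _
  rw [expand] at hP
  ext e
  by_cases he : e ∈ P.support
  · have := congrArg (coeff (T e)) hP
    rw [coeff_sum] at this
    rw [Finset.sum_eq_single e (fun u _ hne => by
      rw [coeff_monomial, if_neg (fun h => hne (hT h))]) (fun h => absurd he h)] at this
    simpa [coeff_monomial] using this
  · simpa using notMem_support_iff.mp he

theorem stmt_13_aux (p : ℕ) [Fact p.Prime] (k : Type*) [Field k] [CharP k p] :
    AlgebraicIndependent k
      ![(X (0,0) * X (0,1) ^ (p-1) + X (1,1) ^ p : MvPolynomial (Fin 2 × Fin 2) k),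
        X (0,1), X (0,0) * X (1,1) - X (0,1) * X (1,0)] ∧
    (∀ x : MvPolynomial (Fin 2 × Fin 2) k,
        x ∈ Algebra.adjoin k {(X ((0:Fin 2),(1:Fin 2)) : MvPolynomial (Fin 2 × Fin 2) k),
          X (0,0) * X (1,1) - X (0,1) * X (1,0), X (0,0) * X (0,1) ^ (p-1) + X (1,1) ^ p} ↔
        ∃ m : ℕ, X (0,1) ^ m * x ∈ Algebra.adjoin k {(X ((0:Fin 2),(1:Fin 2)) : MvPolynomial (Fin 2 × Fin 2) k),
          X (0,0) * X (1,1) - X (0,1) * X (1,0), X (0,0) * X (0,1) ^ (p-1) + X (1,1) ^ p}) ∧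
    (∀ y : MvPolynomial (Fin 2 × Fin 2) k,
        y ∈ Algebra.adjoin k {(X ((0:Fin 2),(1:Fin 2)) : MvPolynomial (Fin 2 × Fin 2) k),
          X (0,0) * X (1,1) - X (0,1) * X (1,0), X (0,0) * X (0,1) ^ (p-1) + X (1,1) ^ p} →
        (∃ z, y = X (0,1) * z) →
        ∃ z ∈ Algebra.adjoin k {(X ((0:Fin 2),(1:Fin 2)) : MvPolynomial (Fin 2 × Fin 2) k),
          X (0,0) * X (1,1) - X (0,1) * X (1,0), X (0,0) * X (0,1) ^ (p-1) + X (1,1) ^ p},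
          y = X (0,1) * z) := by
  have hp : p.Prime := Fact.out
  have hp2 : 2 ≤ p := hp.two_le
  set Δ₁ : MvPolynomial (Fin 2 × Fin 2) k := X (0,1) with hΔ₁
  set Δ₂ : MvPolynomial (Fin 2 × Fin 2) k := X (0,0) * X (1,1) - X (0,1) * X (1,0) with hΔ₂
  set α : MvPolynomial (Fin 2 × Fin 2) k := X (0,0) * X (0,1) ^ (p-1) + X (1,1) ^ p with hα
  set Rzip : Subalgebra k (MvPolynomial (Fin 2 × Fin 2) k) := Algebra.adjoin k {Δ₁, Δ₂, α} with hRzip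
  -- Part (a)
  have parta : AlgebraicIndependent k ![α, Δ₁, Δ₂] := by
    set d3 : Fin 3 → (Fin 2 × Fin 2 →₀ ℕ) :=
      ![Finsupp.single ((1 : Fin 2), (1 : Fin 2)) p, Finsupp.single (0, 1) 1,
        Finsupp.single (0, 1) 1 + Finsupp.single (1, 0) 1] with hd3
    have hT3 : Function.Injective fun e : Fin 3 →₀ ℕ => e.sum fun i n => n • d3 i := by
      intro e e' h
      have ht : ∀ (e : Fin 3 →₀ ℕ) (t : Fin 2 × Fin 2),
          (e.sum fun i n => n • d3 i) t = ∑ i : Fin 3, e i * (d3 i) t := by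
        intro e t
        rw [Finsupp.sum_apply, Finsupp.sum_fintype] <;> simp
      have h11 := congrArg (fun f => f ((1 : Fin 2), (1 : Fin 2))) h
      have h01 := congrArg (fun f => f ((0 : Fin 2), (1 : Fin 2))) h
      have h10 := congrArg (fun f => f ((1 : Fin 2), (0 : Fin 2))) h
      simp only [ht] at h11 h01 h10
      simp only [ht, hd3, Fin.sum_univ_three, Matrix.cons_val_zero, Matrix.cons_val_one,
        Matrix.head_cons, Matrix.cons_val_two, Matrix.tail_cons, Finsupp.add_apply,
        Finsupp.single_apply] at h11 h01 h10
      norm_num [Prod.ext_iff] at h11 h01 h10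
      have h0 : e 0 = e' 0 := by
        rcases h11 with h | h
        · exact h
        · omega
      have h2 : e 2 = e' 2 := h10
      have h1 : e 1 = e' 1 := by omega
      ext i
      fin_cases i
      · exact h0
      · exact h1
      · exact h2
    have hmono := aux_monomial_indep (k := k) d3 hT3
    refine AlgebraicIndependent.of_comp
      (aeval (fun ij : Fin 2 × Fin 2 =>
        (![![0, X (0, 1)], ![-(X (1, 0)), X (1, 1)]] ij.1 ij.2 : MvPolynomial (Fin 2 × Fin 2) k)) : MvPolynomial (Fin 2 × Fin 2) k →ₐ[k] MvPolynomial (Fin 2 × Fin 2) k) ?_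
    have hcomp : (aeval (fun ij : Fin 2 × Fin 2 =>
        (![![0, X (0, 1)], ![-(X (1, 0)), X (1, 1)]] ij.1 ij.2 : MvPolynomial (Fin 2 × Fin 2) k)) : MvPolynomial (Fin 2 × Fin 2) k →ₐ[k] MvPolynomial (Fin 2 × Fin 2) k)
          ∘ ![α, Δ₁, Δ₂] = fun i => monomial (d3 i) (1 : k) := by
      funext i
      fin_cases i
      · show aeval _ α = monomial (d3 0) 1
        rw [hα]
        have : (aeval (fun ij : Fin 2 × Fin 2 =>
            (![![0, X (0, 1)], ![-(X (1, 0)), X (1, 1)]] ij.1 ij.2 : MvPolynomial (Fin 2 × Fin 2) k)) : MvPolynomial (Fin 2 × Fin 2) k →ₐ[k] MvPolynomial (Fin 2 × Fin 2) k)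
              (X (0,0) * X (0,1) ^ (p-1) + X (1,1) ^ p) = X (1,1) ^ p := by
          simp
        rw [this, hd3]
        show _ = monomial (Finsupp.single ((1:Fin 2),(1:Fin 2)) p) (1:k)
        exact X_pow_eq_monomial
      · show aeval _ Δ₁ = monomial (d3 1) 1
        rw [hΔ₁]
        have : (aeval (fun ij : Fin 2 × Fin 2 =>
            (![![0, X (0, 1)], ![-(X (1, 0)), X (1, 1)]] ij.1 ij.2 : MvPolynomial (Fin 2 × Fin 2) k)) : MvPolynomial (Fin 2 × Fin 2) k →ₐ[k] MvPolynomial (Fin 2 × Fin 2) k)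
              (X (0,1)) = X (0,1) := by simp
        rw [this, hd3]
        rfl
      · show aeval _ Δ₂ = monomial (d3 2) 1
        rw [hΔ₂]
        have : (aeval (fun ij : Fin 2 × Fin 2 =>
            (![![0, X (0, 1)], ![-(X (1, 0)), X (1, 1)]] ij.1 ij.2 : MvPolynomial (Fin 2 × Fin 2) k)) : MvPolynomial (Fin 2 × Fin 2) k →ₐ[k] MvPolynomial (Fin 2 × Fin 2) k)
              (X (0,0) * X (1,1) - X (0,1) * X (1,0)) = X (0,1) * X (1,0) := by
          simp
        rw [this, hd3]
        show (monomial (Finsupp.single ((0:Fin 2),(1:Fin 2)) 1) (1:k)) *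
            (monomial (Finsupp.single ((1:Fin 2),(0:Fin 2)) 1) (1:k)) = _
        rw [monomial_mul, one_mul]
        simp
    rw [hcomp]
    exact hmono
  -- pair independence for part (c)
  set d2 : Fin 2 → (Fin 2 × Fin 2 →₀ ℕ) :=
    ![Finsupp.single ((0 : Fin 2), (0 : Fin 2)) 1 + Finsupp.single (1, 1) 1,
      Finsupp.single (1, 1) p] with hd2
  have hT2 : Function.Injective fun e : Fin 2 →₀ ℕ => e.sum fun i n => n • d2 i := by
    intro e e' h
    have ht : ∀ (e : Fin 2 →₀ ℕ) (t : Fin 2 × Fin 2),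
        (e.sum fun i n => n • d2 i) t = ∑ i : Fin 2, e i * (d2 i) t := by
      intro e t
      rw [Finsupp.sum_apply, Finsupp.sum_fintype] <;> simp
    have h00 := congrArg (fun f => f ((0 : Fin 2), (0 : Fin 2))) h
    have h11 := congrArg (fun f => f ((1 : Fin 2), (1 : Fin 2))) h
    simp only [ht, hd2, Fin.sum_univ_two, Matrix.cons_val_zero, Matrix.cons_val_one,
      Matrix.head_cons, Finsupp.add_apply, Finsupp.single_apply] at h00 h11
    norm_num [Prod.ext_iff] at h00 h11
    have h0 : e 0 = e' 0 := h00
    have h1 : e 1 = e' 1 := by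
      have hmul : e 1 * p = e' 1 * p := by omega
      exact Nat.eq_of_mul_eq_mul_right hp.pos hmul
    ext i
    fin_cases i
    · exact h0
    · exact h1
  have hpair := aux_monomial_indep (k := k) d2 hT2
  -- description of Rzip as a range
  set v3 : Fin 3 → MvPolynomial (Fin 2 × Fin 2) k := ![Δ₁, Δ₂, α] with hv3
  have hrange : Rzip = (aeval v3 : MvPolynomial (Fin 3) k →ₐ[k] MvPolynomial (Fin 2 × Fin 2) k).range := by
    have hset : ({Δ₁, Δ₂, α} : Set (MvPolynomial (Fin 2 × Fin 2) k)) = Set.range v3 := by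
      rw [hv3, Matrix.range_cons, Matrix.range_cons, Matrix.range_cons, Matrix.range_empty]
      ext t
      simp
      tauto
    rw [hRzip, hset, Algebra.adjoin_range_eq_range_aeval]
  -- part (c)
  have partc : ∀ y : MvPolynomial (Fin 2 × Fin 2) k, y ∈ Rzip → (∃ z, y = Δ₁ * z) → ∃ z ∈ Rzip, y = Δ₁ * z := by
    rintro y hy ⟨z, hz⟩
    rw [hrange] at hy
    obtain ⟨P, hP⟩ := hy
    set E := MvPolynomial.finSuccEquiv k 2 with hE
    set c₀ : MvPolynomial (Fin 2) k := (E P).coeff 0 with hc₀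
    set P₁ : MvPolynomial (Fin 3) k := E.symm ((E P).divX) with hP₁def
    have hXsymm : E.symm Polynomial.X = (X 0 : MvPolynomial (Fin 3) k) := by
      rw [hE, ← finSuccEquiv_X_zero (R := k) (n := 2)]
      exact (MvPolynomial.finSuccEquiv k 2).symm_apply_apply _
    have hCsymm : ∀ c : MvPolynomial (Fin 2) k,
        E.symm (Polynomial.C c) = rename Fin.succ c := by
      intro c
      apply E.injective
      rw [AlgEquiv.apply_symm_apply]
      induction c using MvPolynomial.induction_on with
      | C r => simp [hE, finSuccEquiv_apply]
      | add f g hf hg => simp only [map_add, hf, hg]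
      | mul_X f j hf => simp only [map_mul, hf, rename_X, hE, finSuccEquiv_X_succ]
    have hdecomp : P = X 0 * P₁ + rename Fin.succ c₀ := by
      conv_lhs => rw [← E.symm_apply_apply P, ← Polynomial.X_mul_divX_add (E P)]
      rw [map_add, map_mul, hXsymm, hCsymm]
    have hP' : (aeval v3) P = y := hP
    have hy2 : y = Δ₁ * (aeval v3) P₁ + (aeval (v3 ∘ Fin.succ)) c₀ := by
      rw [← hP', hdecomp, map_add, map_mul, aeval_X, aeval_rename]
      rw [show v3 0 = Δ₁ from by rw [hv3]; simp]
    set φ : MvPolynomial (Fin 2 × Fin 2) k →ₐ[k] MvPolynomial (Fin 2 × Fin 2) k := aeval (fun ij : Fin 2 × Fin 2 =>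
      (![![X (0, 0), 0], ![X (1, 0), X (1, 1)]] ij.1 ij.2 : MvPolynomial (Fin 2 × Fin 2) k)) with hφ
    have hφΔ₁ : φ Δ₁ = 0 := by rw [hΔ₁, hφ]; simp
    have hφy : φ y = 0 := by rw [hz, map_mul, hφΔ₁, zero_mul]
    have happ := congrArg φ hy2
    rw [hφy, map_add, map_mul, hφΔ₁, zero_mul, zero_add] at happ
    have hcomp2 : φ ((aeval (v3 ∘ Fin.succ)) c₀)
        = (aeval (fun i => monomial (d2 i) (1 : k))) c₀ := by
      rw [comp_aeval_apply]
      have hfam : (fun i => φ ((v3 ∘ Fin.succ) i)) = fun i => monomial (d2 i) (1 : k) := by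
        funext i
        fin_cases i
        · show φ (v3 (Fin.succ 0)) = monomial (d2 0) 1
          have hv : v3 (Fin.succ 0) = Δ₂ := by rw [hv3]; rfl
          rw [hv, hΔ₂, hφ]
          have : (aeval (fun ij : Fin 2 × Fin 2 =>
              (![![X (0, 0), 0], ![X (1, 0), X (1, 1)]] ij.1 ij.2 : MvPolynomial (Fin 2 × Fin 2) k)) : MvPolynomial (Fin 2 × Fin 2) k →ₐ[k] MvPolynomial (Fin 2 × Fin 2) k)
                (X (0,0) * X (1,1) - X (0,1) * X (1,0)) = X (0,0) * X (1,1) := by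
            simp
          rw [this, hd2]
          show (monomial (Finsupp.single ((0:Fin 2),(0:Fin 2)) 1) (1:k)) *
              (monomial (Finsupp.single ((1:Fin 2),(1:Fin 2)) 1) (1:k)) = _
          rw [monomial_mul, one_mul]
          simp
        · show φ (v3 (Fin.succ 1)) = monomial (d2 1) 1
          have hv : v3 (Fin.succ 1) = α := by rw [hv3]; rfl
          rw [hv, hα, hφ]
          have : (aeval (fun ij : Fin 2 × Fin 2 =>
              (![![X (0, 0), 0], ![X (1, 0), X (1, 1)]] ij.1 ij.2 : MvPolynomial (Fin 2 × Fin 2) k)) : MvPolynomial (Fin 2 × Fin 2) k →ₐ[k] MvPolynomial (Fin 2 × Fin 2) k)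
                (X (0,0) * X (0,1) ^ (p-1) + X (1,1) ^ p) = X (1,1) ^ p := by
            have hzp : (0 : MvPolynomial (Fin 2 × Fin 2) k) ^ (p - 1) = 0 := zero_pow (by omega)
            simp [hzp]
          rw [this, hd2]
          show _ = monomial (Finsupp.single ((1:Fin 2),(1:Fin 2)) p) (1:k)
          exact X_pow_eq_monomial
      rw [hfam]
    have hc0 : c₀ = 0 := by
      apply hpair
      rw [map_zero, ← hcomp2, ← happ]
    refine ⟨(aeval v3) P₁, ?_, ?_⟩
    · rw [hrange]
      exact ⟨P₁, rfl⟩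
    · rw [hy2, hc0, map_zero, add_zero]
  -- part (b)
  have hΔne : (Δ₁ : MvPolynomial (Fin 2 × Fin 2) k) ≠ 0 := by rw [hΔ₁]; exact X_ne_zero _
  have key : ∀ (m : ℕ) (x : MvPolynomial (Fin 2 × Fin 2) k) , Δ₁ ^ m * x ∈ Rzip → x ∈ Rzip := by
    intro m
    induction m with
    | zero => intro x hx; simpa using hx
    | succ n ih =>
      intro x hx
      have h1 : Δ₁ ^ (n + 1) * x = Δ₁ * (Δ₁ ^ n * x) := by ring
      obtain ⟨z, hzmem, hzeq⟩ := partc _ hx ⟨_, h1⟩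
      have h2 : Δ₁ ^ n * x = z := mul_left_cancel₀ hΔne (by rw [← hzeq, ← h1])
      exact ih x (h2 ▸ hzmem)
  refine ⟨parta, ?_, partc⟩
  intro x
  constructor
  · intro hx
    exact ⟨0, by simpa using hx⟩
  · rintro ⟨m, hm⟩
    exact key m x hm



/-- Let `k` be algebraically closed of characteristic `p`,
`R = k[a₁₁,a₁₂,a₂₁,a₂₂]`, `Δ₁ = a₁₂`, `Δ₂ = a₁₁a₂₂ − a₁₂a₂₁`,
`α = a₁₁·a₁₂^{p−1} + a₂₂^p`, and `R_zip = k[Δ₁,Δ₂,α] ⊆ R`. Then: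
(a) `α, Δ₁, Δ₂` are algebraically independent over `k` (so `R_zip` is a polynomial ring in
three variables); (b) `R_zip = R ∩ R_zip[1/Δ₁]` inside `Frac R`, i.e. an element of `R`
some `Δ₁`-power multiple of which lies in `R_zip` already lies in `R_zip`; equivalently the
map `k[Δ₁,Δ₂,α]/(Δ₁) → R/(Δ₁)` is injective, i.e. an element of `R_zip` divisible by `Δ₁`
in `R` is divisible by `Δ₁` in `R_zip`. -/
theorem stmt_13 (p : ℕ) [Fact p.Prime] (k : Type*) [Field k] [IsAlgClosed k] [CharP k p] :
    let R := MvPolynomial (Fin 2 × Fin 2) k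
    let a : Fin 2 → Fin 2 → R := fun i j => MvPolynomial.X (i, j)
    let Δ₁ : R := a 0 1
    let Δ₂ : R := a 0 0 * a 1 1 - a 0 1 * a 1 0
    let α : R := a 0 0 * (a 0 1) ^ (p - 1) + (a 1 1) ^ p
    let Rzip : Subalgebra k R := Algebra.adjoin k {Δ₁, Δ₂, α}
    AlgebraicIndependent k ![α, Δ₁, Δ₂] ∧
    (∀ x : R, x ∈ Rzip ↔ ∃ m : ℕ, Δ₁ ^ m * x ∈ Rzip) ∧
    (∀ y : R, y ∈ Rzip → (∃ z : R, y = Δ₁ * z) → ∃ z ∈ Rzip, y = Δ₁ * z) := by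
  intro R a Δ₁ Δ₂ α Rzip
  exact stmt_13_aux p k
end
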